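/- Let s ≤ m, let r_s,…,r_{m−1} be positive real numbers, and for each j ∈ {s,…,m−1} let 𝒫_j be a real polynomial in the variables z_s,…,z_{j−1} that is weighted homogeneous of degree r_j, i.e. 𝒫_j(λ^{r_s} z_s,…,λ^{r_{j−1}} z_{j−1}) = λ^{r_j} 𝒫_j(z_s,…,z_{j−1}) for all λ > 0; let 𝒫₀ be a real polynomial in z_s,…,z_{m−1} that is weighted homogeneous of degree 1 in the same sense. Consider the vector field V = x ∂_x + Σ_{j=s}^{m−1} (r_j y_j + 𝒫_j(y_s,…,y_{j−1})) ∂_{y_j} on (0,∞)_x × ℝ^{m−s}_y. Then there exist real polynomials 𝒫♯_j in the variables (Z_s,…,Z_{j−1}, t), for j = s,…,m−1, and a real polynomial 𝒫♯₀ in (Z_s,…,Z_{m−1}, t), such that the functions Y_j, defined recursively by Y_j(x,y) = y_j x^{−r_j} − 𝒫♯_j(Y_s(x,y),…,Y_{j−1}(x,y), log x), satisfy V Y_j = 0 on (0,∞) × ℝ^{m−s} for every j, and V(𝒫♯₀(Y_s,…,Y_{m−1}, log x)) = x^{−1} 𝒫₀(y_s,…,y_{m−1}) on (0,∞) × ℝ^{m−s}.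 -/

import Mathlib

open Finset MvPolynomial

section Alg
variable {K : ℕ}

/-- Formal antiderivative in the variable `none`. -/
noncomputable def tIntegral (p : MvPolynomial (Option (Fin K)) ℝ) :
    MvPolynomial (Option (Fin K)) ℝ :=
  ∑ m ∈ p.support,
    monomial (m + Finsupp.single (none : Option (Fin K)) 1) (p.coeff m / (m none + 1))

lemma pderiv_tIntegral (p : MvPolynomial (Option (Fin K)) ℝ) :
    pderiv none (tIntegral p) = p := by
  rw [tIntegral, map_sum]
  conv_rhs => rw [p.as_sum]
  refine Finset.sum_congr rfl fun m _ => ?_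
  rw [pderiv_monomial]
  have h1 : (m + Finsupp.single (none : Option (Fin K)) 1) - Finsupp.single none 1 = m :=
    add_tsub_cancel_right _ _
  have h2 : ((m + Finsupp.single (none : Option (Fin K)) 1) : (Option (Fin K)) →₀ ℕ) none = m none + 1 := by
    simp
  rw [h1, h2]
  congr 1
  push_cast
  field_simp

lemma vars_tIntegral (p : MvPolynomial (Option (Fin K)) ℝ) :
    (tIntegral p).vars ⊆ insert none p.vars := by
  classical
  refine (vars_sum_subset _ _).trans ?_
  rw [Finset.biUnion_subset]
  intro m hm
  by_cases h : (p.coeff m / (m none + 1) : ℝ) = 0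
  · rw [h, (monomial _).map_zero]
    simp [vars_def]
  · rw [vars_monomial h]
    intro v hv
    rcases Finset.mem_union.mp (Finsupp.support_add hv) with h1 | h1
    · exact Finset.mem_insert_of_mem ((mem_vars v).2 ⟨m, hm, h1⟩)
    · have : v = none := ((Finsupp.mem_support_single v none 1).mp h1).1
      simp [this]

end Alg

section Alg2
variable {K : ℕ}

lemma evalBind {σ τ : Type*} (u : τ → ℝ) (g : σ → MvPolynomial τ ℝ)
    (p : MvPolynomial σ ℝ) :
    eval u (bind₁ g p) = eval (fun i => eval u (g i)) p := by
  simpa [aeval_def, algebraMap_eq] using aeval_bind₁ (R := ℝ) (S := ℝ) u g p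

lemma bind₁_congr_vars {σ τ : Type*} {f g : σ → MvPolynomial τ ℝ}
    {p : MvPolynomial σ ℝ} (h : ∀ m ∈ p.vars, f m = g m) :
    bind₁ f p = bind₁ g p := by
  have := hom_congr_vars (f₁ := ((bind₁ f : MvPolynomial σ ℝ →ₐ[ℝ] MvPolynomial τ ℝ) :
      MvPolynomial σ ℝ →+* MvPolynomial τ ℝ))
    (f₂ := ((bind₁ g : MvPolynomial σ ℝ →ₐ[ℝ] MvPolynomial τ ℝ) :
      MvPolynomial σ ℝ →+* MvPolynomial τ ℝ))
    (p₁ := p) (p₂ := p) ?_ ?_ rfl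
  · exact this
  · ext a
    simp
  · intro m hm _
    simpa using h m hm

/-- Chain rule for `pderiv` and `bind₁` over a fintype of variables. -/
lemma pderiv_bind₁_chain {σ : Type*} [Fintype σ] [DecidableEq σ]
    (f : σ → MvPolynomial σ ℝ) (j : σ) (p : MvPolynomial σ ℝ) :
    pderiv j (bind₁ f p) = ∑ v : σ, bind₁ f (pderiv v p) * pderiv j (f v) := by
  induction p using MvPolynomial.induction_on with
  | C a => simp [pderiv_C]
  | add p q hp hq =>
      simp only [map_add, hp, hq, add_mul, Finset.sum_add_distrib]
  | mul_X p v₀ hp =>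
      rw [map_mul, bind₁_X_right, pderiv_mul, hp]
      have : ∀ v : σ, bind₁ f (pderiv v (p * X v₀)) * pderiv j (f v) =
          (bind₁ f (pderiv v p) * pderiv j (f v)) * f v₀ +
          (if v = v₀ then bind₁ f p * pderiv j (f v) else 0) := by
        intro v
        rw [pderiv_mul, pderiv_X]
        by_cases hv : v = v₀
        · subst hv; simp [Pi.single_eq_same]; ring
        · simp [hv, Pi.single_eq_of_ne (Ne.symm hv)]; ring
      rw [Finset.sum_congr rfl fun v _ => this v, Finset.sum_add_distrib,
        ← Finset.sum_mul, Finset.sum_ite_eq' Finset.univ v₀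
          (fun v => bind₁ f p * pderiv j (f v))]
      simp only [Finset.mem_univ, if_true]

lemma finStrongInd {C : Fin K → Prop} (h : ∀ i, (∀ l, l < i → C l) → C i) : ∀ i, C i := by
  have H : ∀ n : ℕ, ∀ i : Fin K, i.1 < n → C i := by
    intro n
    induction n with
    | zero => intro i hi; omega
    | succ n IH =>
        intro i hi
        exact h i fun l hl => IH l (by omega)
  exact fun i => H (i.1 + 1) i (Nat.lt_succ_self _)

end Alg2

section Defs
variable {K : ℕ}

/-- The polynomials `Wᵢ = Zᵢ + Qᵢ`, defined by strong recursion. -/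
noncomputable def Wpoly (P : Fin K → MvPolynomial (Fin K) ℝ) : Fin K → MvPolynomial (Option (Fin K)) ℝ
  | i => X (some i) + tIntegral (bind₁
      (fun l : Fin K => if h : l < i then Wpoly P l else 0) (P i))
  termination_by i => i.1
  decreasing_by exact h

/-- The correction polynomials `Qᵢ`. -/
noncomputable def Qpoly (P : Fin K → MvPolynomial (Fin K) ℝ) (i : Fin K) :
    MvPolynomial (Option (Fin K)) ℝ :=
  tIntegral (bind₁ (fun l : Fin K => if h : l < i then Wpoly P l else 0) (P i))

lemma Wpoly_eq (P : Fin K → MvPolynomial (Fin K) ℝ) (i : Fin K) :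
    Wpoly P i = X (some i) + Qpoly P i := by
  rw [Wpoly, Qpoly]

/-- The inverse substitution polynomials `Sᵢ`. -/
noncomputable def Spoly (P : Fin K → MvPolynomial (Fin K) ℝ) : Fin K → MvPolynomial (Option (Fin K)) ℝ
  | i => X (some i) - bind₁
      (fun v : Option (Fin K) => v.elim (X none)
        (fun l => if h : l < i then Spoly P l else 0)) (Qpoly P i)
  termination_by i => i.1
  decreasing_by exact h

/-- The full substitution `Ŝ`. -/
noncomputable def Shat (P : Fin K → MvPolynomial (Fin K) ℝ) :
    Option (Fin K) → MvPolynomial (Option (Fin K)) ℝ :=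
  fun v => v.elim (X none) (Spoly P)

lemma varsQ (P : Fin K → MvPolynomial (Fin K) ℝ)
    (hPvars : ∀ i, ∀ v ∈ (P i).vars, v < i) :
    ∀ i : Fin K, ∀ v ∈ (Qpoly P i).vars, v = none ∨ ∃ l, v = some l ∧ l < i := by
  refine finStrongInd ?_
  intro i IH v hv
  rcases Finset.mem_insert.mp (vars_tIntegral _ hv) with h | h
  · exact Or.inl h
  · obtain ⟨m, hm, hvm⟩ := Finset.mem_biUnion.mp (vars_bind₁ _ _ h)
    have hmi : m < i := hPvars i m hm
    rw [dif_pos hmi, Wpoly_eq] at hvm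
    have := vars_add_subset _ _ hvm
    rcases Finset.mem_union.mp this with h1 | h1
    · rw [vars_X] at h1
      exact Or.inr ⟨m, Finset.mem_singleton.mp h1, hmi⟩
    · rcases IH m hmi v h1 with h2 | ⟨l, rfl, hl⟩
      · exact Or.inl h2
      · exact Or.inr ⟨l, rfl, hl.trans hmi⟩

lemma Qpoly_eq (P : Fin K → MvPolynomial (Fin K) ℝ)
    (hPvars : ∀ i, ∀ v ∈ (P i).vars, v < i) (i : Fin K) :
    Qpoly P i = tIntegral (bind₁ (Wpoly P) (P i)) := by
  rw [Qpoly]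
  congr 1
  exact bind₁_congr_vars fun m hm => dif_pos (hPvars i m hm)

lemma Spoly_eq (P : Fin K → MvPolynomial (Fin K) ℝ)
    (hPvars : ∀ i, ∀ v ∈ (P i).vars, v < i) (i : Fin K) :
    Spoly P i = X (some i) - bind₁ (Shat P) (Qpoly P i) := by
  rw [Spoly]
  congr 1
  refine bind₁_congr_vars fun v hv => ?_
  rcases varsQ P hPvars i v hv with rfl | ⟨l, rfl, hl⟩
  · rfl
  · simp only [Option.elim, Shat, dif_pos hl]

/-- `Ŵ ∘ Ŝ = id` on each `Spoly`. -/
lemma bind₁_Shat_Wpoly (P : Fin K → MvPolynomial (Fin K) ℝ)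
    (hPvars : ∀ i, ∀ v ∈ (P i).vars, v < i) (m : Fin K) :
    bind₁ (Shat P) (Wpoly P m) = X (some m) := by
  rw [Wpoly_eq, map_add]
  have h1 : bind₁ (Shat P) (X (some m) : MvPolynomial (Option (Fin K)) ℝ) = Spoly P m := by
    rw [bind₁_X_right]; rfl
  rw [h1, Spoly_eq P hPvars m]
  ring

end Defs

section Anal
variable {K : ℕ}

open Real ContinuousLinearMap in
/-- Derivative of the evaluation of a polynomial along `u(s) = (log x, y_l x^{-ρ_l})`. -/
lemma hasFDeriv_eval_u (ρ : Fin K → ℝ) (P : Fin K → MvPolynomial (Fin K) ℝ)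
    {x : ℝ} (hx : 0 < x) (y : Fin K → ℝ) (p : MvPolynomial (Option (Fin K)) ℝ) :
    ∃ D : ℝ × (Fin K → ℝ) →L[ℝ] ℝ,
      HasFDerivAt (fun s : ℝ × (Fin K → ℝ) =>
        eval (fun v : Option (Fin K) =>
          v.elim (Real.log s.1) (fun l => s.2 l * s.1 ^ (-(ρ l)))) p) D (x, y) ∧
      D (x, fun l => ρ l * y l + eval y (P l)) =
        ∑ v : Option (Fin K),
          (v.elim 1 (fun l => x ^ (-(ρ l)) * eval y (P l))) *
          eval (fun w : Option (Fin K) =>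
            w.elim (Real.log x) (fun l => y l * x ^ (-(ρ l)))) (pderiv v p) := by
  induction p using MvPolynomial.induction_on with
  | C a =>
      refine ⟨0, ?_, ?_⟩
      · simpa only [eval_C] using hasFDerivAt_const a (x, y)
      · simp [pderiv_C]
  | add p q hp hq =>
      obtain ⟨Dp, hDp, ep⟩ := hp
      obtain ⟨Dq, hDq, eq⟩ := hq
      refine ⟨Dp + Dq, ?_, ?_⟩
      · simpa only [map_add, Pi.add_def] using hDp.add hDq
      · simp only [ContinuousLinearMap.add_apply, ep, eq, map_add, mul_add,
          ← Finset.sum_add_distrib]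
  | mul_X p v hp =>
      obtain ⟨Dp, hDp, ep⟩ := hp
      -- derivative of the coordinate function
      have hcoord : ∃ Dv : ℝ × (Fin K → ℝ) →L[ℝ] ℝ,
          HasFDerivAt (fun s : ℝ × (Fin K → ℝ) =>
            Option.elim v (Real.log s.1) (fun l => s.2 l * s.1 ^ (-(ρ l)))) Dv (x, y) ∧
          Dv (x, fun l => ρ l * y l + eval y (P l)) =
            Option.elim v 1 (fun l => x ^ (-(ρ l)) * eval y (P l)) := by
        cases v with
        | none =>
            refine ⟨x⁻¹ • ContinuousLinearMap.fst ℝ ℝ (Fin K → ℝ), ?_, ?_⟩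
            · exact by have := (Real.hasDerivAt_log hx.ne').comp_hasFDerivAt (𝕜 := ℝ) (x, y) (hasFDerivAt_fst (E := ℝ) (F := Fin K → ℝ)); exact this
            · simp only [ContinuousLinearMap.smul_apply, ContinuousLinearMap.coe_fst',
                smul_eq_mul, Option.elim]
              exact inv_mul_cancel₀ hx.ne'
        | some l =>
            have h1 : HasFDerivAt (fun s : ℝ × (Fin K → ℝ) => s.2 l)
                ((ContinuousLinearMap.proj l).comp
                  (ContinuousLinearMap.snd ℝ ℝ (Fin K → ℝ))) (x, y) :=
              ((ContinuousLinearMap.proj l).comp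
                (ContinuousLinearMap.snd ℝ ℝ (Fin K → ℝ))).hasFDerivAt
            have h2 : HasFDerivAt (fun s : ℝ × (Fin K → ℝ) => s.1 ^ (-(ρ l)))
                ((-(ρ l) * x ^ (-(ρ l) - 1)) • ContinuousLinearMap.fst ℝ ℝ (Fin K → ℝ))
                (x, y) :=
              by have := (Real.hasDerivAt_rpow_const (p := -(ρ l))
                (Or.inl hx.ne')).comp_hasFDerivAt (𝕜 := ℝ) (x, y) (hasFDerivAt_fst (E := ℝ) (F := Fin K → ℝ)); exact this
            refine ⟨_, h1.mul h2, ?_⟩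
            have hpow : x ^ (-(ρ l) - 1) * x = x ^ (-(ρ l)) := by
              rw [← Real.rpow_add_one hx.ne' (-(ρ l) - 1)]
              norm_num
            simp only [ContinuousLinearMap.add_apply, ContinuousLinearMap.smul_apply,
              ContinuousLinearMap.coe_comp', Function.comp_apply,
              ContinuousLinearMap.coe_snd', ContinuousLinearMap.proj_apply,
              ContinuousLinearMap.coe_fst', smul_eq_mul, Option.elim]
            rw [show -(ρ l) * x ^ (-(ρ l) - 1) * x =
              -(ρ l) * (x ^ (-(ρ l) - 1) * x) from by ring, hpow]
            ring
      obtain ⟨Dv, hDv, ev⟩ := hcoord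
      refine ⟨(eval (fun w : Option (Fin K) =>
            w.elim (Real.log x) (fun l => y l * x ^ (-(ρ l)))) p) • Dv +
          (Option.elim v (Real.log x) (fun l => y l * x ^ (-(ρ l)))) • Dp, ?_, ?_⟩
      · have := hDp.mul hDv
        simpa only [map_mul, eval_X, Pi.mul_def] using this
      · have hXd : ∀ v' : Option (Fin K),
            eval (fun w : Option (Fin K) =>
              w.elim (Real.log x) (fun l => y l * x ^ (-(ρ l))))
              (pderiv v' (X v : MvPolynomial (Option (Fin K)) ℝ)) =
            if v' = v then 1 else 0 := by
          intro v'
          by_cases h : v' = v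
          · subst h; rw [pderiv_X_self]; simp
          · rw [pderiv_X_of_ne (Ne.symm h)]; simp [h]
        set u₀ : Option (Fin K) → ℝ :=
          fun w : Option (Fin K) => w.elim (Real.log x) (fun l => y l * x ^ (-(ρ l))) with hu₀
        set cv : Option (Fin K) → ℝ :=
          fun w : Option (Fin K) => w.elim 1 (fun l => x ^ (-(ρ l)) * eval y (P l)) with hcv
        have hsum : ∑ v₁ : Option (Fin K), cv v₁ * eval u₀ (pderiv v₁ (p * X v)) =
            u₀ v * (∑ v₁ : Option (Fin K), cv v₁ * eval u₀ (pderiv v₁ p)) +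
            cv v * eval u₀ p := by
          have hterm : ∀ v₁ : Option (Fin K),
              cv v₁ * eval u₀ (pderiv v₁ (p * X v)) =
              u₀ v * (cv v₁ * eval u₀ (pderiv v₁ p)) +
              (if v₁ = v then cv v * eval u₀ p else 0) := by
            intro v₁
            rw [pderiv_mul, map_add, map_mul, map_mul, eval_X, hXd v₁]
            by_cases h : v₁ = v
            · subst h; simp only [if_true]; ring
            · simp only [if_neg h]; ring
          rw [Finset.sum_congr rfl fun v₁ _ => hterm v₁, Finset.sum_add_distrib,
            ← Finset.mul_sum, Finset.sum_ite_eq' Finset.univ v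
              (fun _ => cv v * eval u₀ p)]
          simp only [Finset.mem_univ, if_true]
        rw [hsum]
        simp only [ContinuousLinearMap.add_apply, ContinuousLinearMap.smul_apply,
          smul_eq_mul, ep, ev]
        ring
  end Anal

section Key
variable {K : ℕ}

/-- evaluation point `u₀ = (log x, yₗ x^{-ρₗ})`. -/
noncomputable def uFun (ρ : Fin K → ℝ) (x : ℝ) (y : Fin K → ℝ) : Option (Fin K) → ℝ :=
  fun w => w.elim (Real.log x) (fun l => y l * x ^ (-(ρ l)))

/-- coefficients of the vector field in the chart. -/
noncomputable def cFun (ρ : Fin K → ℝ) (P : Fin K → MvPolynomial (Fin K) ℝ)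
    (x : ℝ) (y : Fin K → ℝ) : Option (Fin K) → ℝ :=
  fun v => v.elim 1 (fun l => x ^ (-(ρ l)) * eval y (P l))

variable (ρ : Fin K → ℝ) (P : Fin K → MvPolynomial (Fin K) ℝ)

lemma evalYv_W (hPvars : ∀ i, ∀ v ∈ (P i).vars, v < i) (x : ℝ) (y : Fin K → ℝ) (m : Fin K) :
    eval (fun v : Option (Fin K) => eval (uFun ρ x y) (Shat P v)) (Wpoly P m) =
      uFun ρ x y (some m) := by
  rw [← evalBind (uFun ρ x y) (Shat P) (Wpoly P m), bind₁_Shat_Wpoly P hPvars m, eval_X]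

lemma rpow_cancel {x : ℝ} (hx : 0 < x) (a : ℝ) : x ^ (-a) * x ^ a = 1 := by
  rw [← Real.rpow_add hx, neg_add_cancel, Real.rpow_zero]

lemma evalYv_bind_P (hPvars : ∀ i, ∀ v ∈ (P i).vars, v < i)
    (hPhom : ∀ i, ∀ c : ℝ, 0 < c → ∀ z : Fin K → ℝ,
      eval (fun l => c ^ (ρ l) * z l) (P i) = c ^ (ρ i) * eval z (P i))
    {x : ℝ} (hx : 0 < x) (y : Fin K → ℝ) (i : Fin K) :
    eval (fun v : Option (Fin K) => eval (uFun ρ x y) (Shat P v)) (bind₁ (Wpoly P) (P i)) =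
      x ^ (-(ρ i)) * eval y (P i) := by
  rw [evalBind]
  have h1 : (fun m => eval (fun v : Option (Fin K) =>
      eval (uFun ρ x y) (Shat P v)) (Wpoly P m)) = fun m => y m * x ^ (-(ρ m)) := by
    funext m
    rw [evalYv_W ρ P hPvars]
    rfl
  rw [h1]
  have h2 := hPhom i x hx (fun m => y m * x ^ (-(ρ m)))
  have h3 : (fun m => x ^ (ρ m) * (y m * x ^ (-(ρ m)))) = y := by
    funext m
    rw [mul_comm (y m), ← mul_assoc, ← Real.rpow_add hx, add_neg_cancel, Real.rpow_zero, one_mul]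
  rw [h3] at h2
  rw [h2, ← mul_assoc, rpow_cancel hx, one_mul]

lemma evalYv_bind_P₀ (hPvars : ∀ i, ∀ v ∈ (P i).vars, v < i)
    (P₀ : MvPolynomial (Fin K) ℝ)
    (hP₀hom : ∀ c : ℝ, 0 < c → ∀ z : Fin K → ℝ,
      eval (fun l => c ^ (ρ l) * z l) P₀ = c * eval z P₀)
    {x : ℝ} (hx : 0 < x) (y : Fin K → ℝ) :
    eval (fun v : Option (Fin K) => eval (uFun ρ x y) (Shat P v)) (bind₁ (Wpoly P) P₀) =
      x⁻¹ * eval y P₀ := by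
  rw [evalBind]
  have h1 : (fun m => eval (fun v : Option (Fin K) =>
      eval (uFun ρ x y) (Shat P v)) (Wpoly P m)) = fun m => y m * x ^ (-(ρ m)) := by
    funext m
    rw [evalYv_W ρ P hPvars]
    rfl
  rw [h1]
  have h2 := hP₀hom x hx (fun m => y m * x ^ (-(ρ m)))
  have h3 : (fun m => x ^ (ρ m) * (y m * x ^ (-(ρ m)))) = y := by
    funext m
    rw [mul_comm (y m), ← mul_assoc, ← Real.rpow_add hx, add_neg_cancel, Real.rpow_zero, one_mul]
  rw [h3] at h2
  rw [h2, ← mul_assoc, inv_mul_cancel₀ hx.ne', one_mul]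

lemma sum_c_pderiv_X (x : ℝ) (y : Fin K → ℝ) (w₀ : Option (Fin K)) :
    ∑ v : Option (Fin K), cFun ρ P x y v *
      eval (uFun ρ x y) (pderiv v (X w₀ : MvPolynomial (Option (Fin K)) ℝ)) =
    cFun ρ P x y w₀ := by
  have h : ∀ v : Option (Fin K),
      cFun ρ P x y v * eval (uFun ρ x y)
        (pderiv v (X w₀ : MvPolynomial (Option (Fin K)) ℝ)) =
      if v = w₀ then cFun ρ P x y w₀ else 0 := by
    intro v
    by_cases hv : v = w₀
    · subst hv; rw [pderiv_X_self]; simp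
    · rw [pderiv_X_of_ne (Ne.symm hv)]; simp [hv]
  rw [Finset.sum_congr rfl fun v _ => h v,
    Finset.sum_ite_eq' Finset.univ w₀ (fun _ => cFun ρ P x y w₀)]
  simp

/-- the core chain-rule computation. -/
lemma sumVval_bind (x : ℝ) (y : Fin K → ℝ) (r : MvPolynomial (Option (Fin K)) ℝ)
    (hS : ∀ l : Fin K, (some l) ∈ r.vars →
      ∑ v : Option (Fin K), cFun ρ P x y v * eval (uFun ρ x y) (pderiv v (Spoly P l)) = 0) :
    ∑ v : Option (Fin K), cFun ρ P x y v * eval (uFun ρ x y) (pderiv v (bind₁ (Shat P) r)) =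
      eval (fun v : Option (Fin K) => eval (uFun ρ x y) (Shat P v)) (pderiv none r) := by
  classical
  have hc : ∀ v : Option (Fin K),
      cFun ρ P x y v * eval (uFun ρ x y) (pderiv v (bind₁ (Shat P) r)) =
      ∑ w : Option (Fin K),
        eval (uFun ρ x y) (bind₁ (Shat P) (pderiv w r)) *
        (cFun ρ P x y v * eval (uFun ρ x y) (pderiv v (Shat P w))) := by
    intro v
    rw [pderiv_bind₁_chain, map_sum, Finset.mul_sum]
    exact Finset.sum_congr rfl fun w _ => by rw [map_mul]; ring
  rw [Finset.sum_congr rfl fun v _ => hc v, Finset.sum_comm]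
  have hterm : ∀ w : Option (Fin K),
      (∑ v : Option (Fin K),
        eval (uFun ρ x y) (bind₁ (Shat P) (pderiv w r)) *
        (cFun ρ P x y v * eval (uFun ρ x y) (pderiv v (Shat P w)))) =
      eval (uFun ρ x y) (bind₁ (Shat P) (pderiv w r)) *
        ∑ v : Option (Fin K), cFun ρ P x y v * eval (uFun ρ x y) (pderiv v (Shat P w)) := by
    intro w
    rw [Finset.mul_sum]
  rw [Finset.sum_congr rfl fun w _ => hterm w]
  rw [Fintype.sum_option]
  have hnone : (∑ v : Option (Fin K), cFun ρ P x y v *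
      eval (uFun ρ x y) (pderiv v (Shat P none))) = 1 := by
    have : Shat P none = X none := rfl
    rw [this, sum_c_pderiv_X]
    rfl
  have hsome : ∀ l : Fin K,
      eval (uFun ρ x y) (bind₁ (Shat P) (pderiv (some l) r)) *
        (∑ v : Option (Fin K), cFun ρ P x y v *
          eval (uFun ρ x y) (pderiv v (Shat P (some l)))) = 0 := by
    intro l
    by_cases hl : (some l) ∈ r.vars
    · have : Shat P (some l) = Spoly P l := rfl
      rw [this, hS l hl, mul_zero]
    · rw [pderiv_eq_zero_of_notMem_vars hl, map_zero, map_zero, zero_mul]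
  rw [Finset.sum_congr rfl fun l _ => hsome l]
  rw [hnone, mul_one, Finset.sum_const_zero, add_zero, evalBind]

/-- `V Yᵢ = 0` at the level of the sums. -/
lemma sumVval_S (hPvars : ∀ i, ∀ v ∈ (P i).vars, v < i)
    (hPhom : ∀ i, ∀ c : ℝ, 0 < c → ∀ z : Fin K → ℝ,
      eval (fun l => c ^ (ρ l) * z l) (P i) = c ^ (ρ i) * eval z (P i))
    {x : ℝ} (hx : 0 < x) (y : Fin K → ℝ) :
    ∀ i : Fin K,
      ∑ v : Option (Fin K), cFun ρ P x y v * eval (uFun ρ x y) (pderiv v (Spoly P i)) = 0 := by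
  refine finStrongInd ?_
  intro i IH
  have hterm : ∀ v : Option (Fin K),
      cFun ρ P x y v * eval (uFun ρ x y) (pderiv v (Spoly P i)) =
      cFun ρ P x y v * eval (uFun ρ x y)
        (pderiv v (X (some i) : MvPolynomial (Option (Fin K)) ℝ)) -
      cFun ρ P x y v * eval (uFun ρ x y) (pderiv v (bind₁ (Shat P) (Qpoly P i))) := by
    intro v
    rw [Spoly_eq P hPvars i, map_sub, map_sub, mul_sub]
  rw [Finset.sum_congr rfl fun v _ => hterm v, Finset.sum_sub_distrib, sum_c_pderiv_X]
  have hQ : ∑ v : Option (Fin K), cFun ρ P x y v *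
      eval (uFun ρ x y) (pderiv v (bind₁ (Shat P) (Qpoly P i))) =
      x ^ (-(ρ i)) * eval y (P i) := by
    rw [sumVval_bind ρ P x y (Qpoly P i) ?_]
    · rw [Qpoly_eq P hPvars i, pderiv_tIntegral]
      exact evalYv_bind_P ρ P hPvars hPhom hx y i
    · intro l hl
      rcases varsQ P hPvars i (some l) hl with h | ⟨l', hl', hlt⟩
      · exact absurd h (by simp)
      · obtain rfl : l = l' := by injection hl'
        exact IH l hlt
  rw [hQ]
  have : cFun ρ P x y (some i) = x ^ (-(ρ i)) * eval y (P i) := rfl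
  rw [this, sub_self]

end Key


/-- **Normal form for a resonant radial vector field: logarithmic corrections.**
Let `ρᵢ > 0` be weights, `Pᵢ` polynomials in the variables of index `< i` which are
weighted homogeneous of degree `ρᵢ`, and `P₀` weighted homogeneous of degree `1`.
Consider the vector field `V = x ∂ₓ + Σᵢ (ρᵢ yᵢ + Pᵢ(y)) ∂_{yᵢ}` on `(0,∞) × ℝ^K`.
Then there are polynomials `Qᵢ` in `(Z₀, …, Z_{i-1}, t)` and `Q₀` in `(Z, t)` such that
the functions `Yᵢ`, defined recursively by `Yᵢ = yᵢ x^{-ρᵢ} - Qᵢ(Y₀, …, Y_{i-1}, log x)`,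
satisfy `V Yᵢ = 0`, and `V (Q₀(Y, log x)) = x⁻¹ P₀(y)`.  Here a polynomial in the `Zₗ`
and `t` is encoded as an `MvPolynomial` over `Option (Fin K)`, with `none` the variable
`t` and `some l` the variable `Z_l`. -/
theorem resonant_vector_field_log_normal_form {K : ℕ}
    (ρ : Fin K → ℝ) (hρ : ∀ i, 0 < ρ i)
    (P : Fin K → MvPolynomial (Fin K) ℝ)
    (hPvars : ∀ i, ∀ v ∈ (P i).vars, v < i)
    (hPhom : ∀ i, ∀ c : ℝ, 0 < c → ∀ z : Fin K → ℝ,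
      MvPolynomial.eval (fun l => c ^ (ρ l) * z l) (P i) =
        c ^ (ρ i) * MvPolynomial.eval z (P i))
    (P₀ : MvPolynomial (Fin K) ℝ)
    (hP₀hom : ∀ c : ℝ, 0 < c → ∀ z : Fin K → ℝ,
      MvPolynomial.eval (fun l => c ^ (ρ l) * z l) P₀ = c * MvPolynomial.eval z P₀) :
    ∃ Q : Fin K → MvPolynomial (Option (Fin K)) ℝ,
    ∃ Q₀ : MvPolynomial (Option (Fin K)) ℝ,
    ∃ Y : Fin K → ℝ × (Fin K → ℝ) → ℝ,
      (∀ i, ∀ v ∈ (Q i).vars, ∀ l : Fin K, v = some l → l < i) ∧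
      (∀ i, ∀ x : ℝ, 0 < x → ∀ y : Fin K → ℝ,
        Y i (x, y) = y i * x ^ (-(ρ i)) -
          MvPolynomial.eval
            (fun v : Option (Fin K) => v.elim (Real.log x) (fun l => Y l (x, y))) (Q i)) ∧
      (∀ i, ∀ x : ℝ, 0 < x → ∀ y : Fin K → ℝ,
        ∃ D : ℝ × (Fin K → ℝ) →L[ℝ] ℝ, HasFDerivAt (Y i) D (x, y) ∧
          D (x, fun l => ρ l * y l + MvPolynomial.eval y (P l)) = 0) ∧
      (∀ x : ℝ, 0 < x → ∀ y : Fin K → ℝ,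
        ∃ D : ℝ × (Fin K → ℝ) →L[ℝ] ℝ,
          HasFDerivAt (fun p : ℝ × (Fin K → ℝ) =>
            MvPolynomial.eval
              (fun v : Option (Fin K) => v.elim (Real.log p.1) (fun l => Y l p)) Q₀)
            D (x, y) ∧
          D (x, fun l => ρ l * y l + MvPolynomial.eval y (P l)) =
            x⁻¹ * MvPolynomial.eval y P₀) := by
  classical
  refine ⟨Qpoly P, tIntegral (bind₁ (Wpoly P) P₀),
    fun i s => eval (fun v : Option (Fin K) =>
      v.elim (Real.log s.1) (fun l => s.2 l * s.1 ^ (-(ρ l)))) (Spoly P i),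
    ?_, ?_, ?_, ?_⟩
  · -- variables of `Q i`
    intro i v hv l hvl
    rcases varsQ P hPvars i v hv with h | ⟨l', hl', hlt⟩
    · rw [hvl] at h; exact absurd h (by simp)
    · rw [hvl] at hl'
      obtain rfl : l = l' := by injection hl'
      exact hlt
  · -- recursion formula
    intro i x hx y
    show eval (uFun ρ x y) (Spoly P i) = y i * x ^ (-(ρ i)) -
      eval (fun v : Option (Fin K) =>
        v.elim (Real.log x) (fun l => eval (uFun ρ x y) (Spoly P l))) (Qpoly P i)
    rw [Spoly_eq P hPvars i, map_sub, eval_X]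
    congr 1
    rw [evalBind]
    have hAB : (fun v : Option (Fin K) => eval (uFun ρ x y) (Shat P v)) =
        (fun v : Option (Fin K) =>
          v.elim (Real.log x) (fun l => eval (uFun ρ x y) (Spoly P l))) := by
      funext v
      cases v with
      | none =>
          show eval (uFun ρ x y) (X none) = Real.log x
          rw [eval_X]; rfl
      | some l => rfl
    rw [hAB]
  · -- V Yᵢ = 0
    intro i x hx y
    obtain ⟨D, hD, hval⟩ := hasFDeriv_eval_u ρ P hx y (Spoly P i)
    exact ⟨D, hD, hval.trans (sumVval_S ρ P hPvars hPhom hx y i)⟩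
  · -- V (Q₀ ∘ (Y, log x)) = x⁻¹ P₀(y)
    intro x hx y
    obtain ⟨D, hD, hval⟩ :=
      hasFDeriv_eval_u ρ P hx y (bind₁ (Shat P) (tIntegral (bind₁ (Wpoly P) P₀)))
    refine ⟨D, ?_, ?_⟩
    · have hfun : (fun s : ℝ × (Fin K → ℝ) =>
          eval (fun v : Option (Fin K) => v.elim (Real.log s.1)
            (fun l => eval (fun w : Option (Fin K) =>
              w.elim (Real.log s.1) (fun l' => s.2 l' * s.1 ^ (-(ρ l')))) (Spoly P l)))
            (tIntegral (bind₁ (Wpoly P) P₀))) =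
          (fun s : ℝ × (Fin K → ℝ) =>
            eval (fun v : Option (Fin K) =>
              v.elim (Real.log s.1) (fun l => s.2 l * s.1 ^ (-(ρ l))))
            (bind₁ (Shat P) (tIntegral (bind₁ (Wpoly P) P₀)))) := by
        funext s
        rw [evalBind]
        have hAB : (fun v : Option (Fin K) =>
            eval (fun w : Option (Fin K) =>
              w.elim (Real.log s.1) (fun l' => s.2 l' * s.1 ^ (-(ρ l')))) (Shat P v)) =
            (fun v : Option (Fin K) => v.elim (Real.log s.1)
              (fun l => eval (fun w : Option (Fin K) =>
                w.elim (Real.log s.1) (fun l' => s.2 l' * s.1 ^ (-(ρ l')))) (Spoly P l))) := by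
          funext v
          cases v with
          | none =>
              show eval (fun w : Option (Fin K) =>
                w.elim (Real.log s.1) (fun l' => s.2 l' * s.1 ^ (-(ρ l')))) (X none) =
                Real.log s.1
              rw [eval_X]
              rfl
          | some l => rfl
        rw [hAB]
      have : HasFDerivAt (fun s : ℝ × (Fin K → ℝ) =>
          eval (fun v : Option (Fin K) => v.elim (Real.log s.1)
            (fun l => eval (fun w : Option (Fin K) =>
              w.elim (Real.log s.1) (fun l' => s.2 l' * s.1 ^ (-(ρ l')))) (Spoly P l)))
            (tIntegral (bind₁ (Wpoly P) P₀))) D (x, y) := by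
        rw [hfun]; exact hD
      exact this
    · refine hval.trans ?_
      have h1 := sumVval_bind ρ P x y (tIntegral (bind₁ (Wpoly P) P₀))
        (fun l _ => sumVval_S ρ P hPvars hPhom hx y l)
      have h2 : eval (fun v : Option (Fin K) => eval (uFun ρ x y) (Shat P v))
          (pderiv none (tIntegral (bind₁ (Wpoly P) P₀))) = x⁻¹ * eval y P₀ := by
        rw [pderiv_tIntegral]
        exact evalYv_bind_P₀ ρ P hPvars P₀ hP₀hom hx y
      exact h1.trans h2
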